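/- Let S ⊆ ℝⁿ be a closed set with 0 ∉ S, let 𝓡, 𝓟 ⊆ ℝⁿ, and let (ψ, π) be a minimal valid pair for S, 𝓡, 𝓟. Then ψ is subadditive over 𝓡, i.e., ψ(r₁ + r₂) ≤ ψ(r₁) + ψ(r₂) whenever r₁, r₂, r₁ + r₂ ∈ 𝓡; π is subadditive over 𝓟, i.e., π(p₁ + p₂) ≤ π(p₁) + π(p₂) whenever p₁, p₂, p₁ + p₂ ∈ 𝓟; and ψ is positively homogeneous over 𝓡, i.e., ψ(λr) = λψ(r) whenever r ∈ 𝓡, λ > 0 and λr ∈ 𝓡. -/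

import Mathlib

open scoped BigOperators
open Pointwise

noncomputable section

/-- `(ψ, π)` is a valid (partial) cut-generating pair for `S, R, P`. -/
def ValidPair {E : Type*} [AddCommGroup E] [Module ℝ E]
    (S R P : Set E) (psi pi : E → ℝ) : Prop :=
  ∀ (k l : ℕ) (r : Fin k → E) (p : Fin l → E),
    (∀ i, r i ∈ R) → (∀ j, p j ∈ P) →
    ∀ (s : Fin k → ℝ) (y : Fin l → ℕ),
      (∀ i, 0 ≤ s i) →
      (∑ i, s i • r i) + (∑ j, (y j : ℝ) • p j) ∈ S →
      1 ≤ (∑ i, psi (r i) * s i) + (∑ j, pi (p j) * (y j : ℝ))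

/-- `W_S⁺`. -/
def Wplus {E : Type*} [AddCommGroup E] [Module ℝ E] (S : Set E) : Set E :=
  {w | ∀ s ∈ S, ∀ lam : ℕ, s + (lam : ℝ) • w ∈ S}

/-- `W_S` (integer translations). -/
def Wint {E : Type*} [AddCommGroup E] [Module ℝ E] (S : Set E) : Set E :=
  {w | ∀ s ∈ S, ∀ lam : ℤ, s + (lam : ℝ) • w ∈ S}

/-- `π` is a lifting of `ψ` (full-space setting). -/
def IsLifting {E : Type*} [AddCommGroup E] [Module ℝ E] (S : Set E) (psi pi : E → ℝ) : Prop :=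
  ValidPair S Set.univ Set.univ psi pi

/-- `π` is a minimal lifting of `ψ` (full-space setting). -/
def IsMinimalLifting {E : Type*} [AddCommGroup E] [Module ℝ E] (S : Set E)
    (psi pi : E → ℝ) : Prop :=
  IsLifting S psi pi ∧ ∀ pi' : E → ℝ, IsLifting S psi pi' → pi' ≤ pi → pi' = pi

/-- `V_ψ(p) = inf {π(p) : π minimal lifting of ψ}`. -/
def Vpsi {E : Type*} [AddCommGroup E] [Module ℝ E] (S : Set E) (psi : E → ℝ) (p : E) : ℝ :=
  sInf {v : ℝ | ∃ pi : E → ℝ, IsMinimalLifting S psi pi ∧ pi p = v}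

/-- `𝓛_{ψ,p*}`. -/
def LiftSet {E : Type*} [AddCommGroup E] [Module ℝ E] (S : Set E) (psi : E → ℝ) (p : E) :
    Set (E → ℝ) :=
  {pi | IsMinimalLifting S psi pi ∧ pi p = Vpsi S psi p}

/-- The fixing region `𝓕_{ψ,p*}`. -/
def FixingRegion {E : Type*} [AddCommGroup E] [Module ℝ E] (S : Set E) (psi : E → ℝ)
    (p : E) : Set E :=
  {q | ∀ pi1 ∈ LiftSet S psi p, ∀ pi2 ∈ LiftSet S psi p, pi1 q = pi2 q}

/-- `(ψ, π)` is a minimal valid pair for `S, R, P`. -/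
def IsMinimalValidPair {E : Type*} [AddCommGroup E] [Module ℝ E]
    (S R P : Set E) (psi pi : E → ℝ) : Prop :=
  ValidPair S R P psi pi ∧
    ∀ psi' pi' : E → ℝ, ValidPair S R P psi' pi' →
      (∀ r ∈ R, psi' r ≤ psi r) → (∀ p ∈ P, pi' p ≤ pi p) →
      (∀ r ∈ R, psi' r = psi r) ∧ (∀ p ∈ P, pi' p = pi p)

section Aux

variable {E : Type*} [AddCommGroup E] [Module ℝ E]

lemma validPair_fintype {S R P : Set E} {psi pi : E → ℝ}
    (h : ValidPair S R P psi pi) {ι κ : Type} [Fintype ι] [Fintype κ]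
    (r : ι → E) (p : κ → E) (hr : ∀ i, r i ∈ R) (hp : ∀ j, p j ∈ P)
    (s : ι → ℝ) (y : κ → ℕ) (hs : ∀ i, 0 ≤ s i)
    (hmem : (∑ i, s i • r i) + (∑ j, (y j : ℝ) • p j) ∈ S) :
    1 ≤ (∑ i, psi (r i) * s i) + (∑ j, pi (p j) * (y j : ℝ)) := by
  classical
  let e := (Fintype.equivFin ι).symm
  let f := (Fintype.equivFin κ).symm
  have h1 : ∑ i, s (e i) • r (e i) = ∑ i, s i • r i :=
    Equiv.sum_comp e fun i => s i • r i
  have h2 : ∑ j, ((y (f j) : ℝ)) • p (f j) = ∑ j, (y j : ℝ) • p j :=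
    Equiv.sum_comp f fun j => (y j : ℝ) • p j
  have h3 : ∑ i, psi (r (e i)) * s (e i) = ∑ i, psi (r i) * s i :=
    Equiv.sum_comp e fun i => psi (r i) * s i
  have h4 : ∑ j, pi (p (f j)) * (y (f j) : ℝ) = ∑ j, pi (p j) * (y j : ℝ) :=
    Equiv.sum_comp f fun j => pi (p j) * (y j : ℝ)
  have := h (Fintype.card ι) (Fintype.card κ) (fun i => r (e i)) (fun j => p (f j))
    (fun i => hr _) (fun j => hp _) (fun i => s (e i)) (fun j => y (f j))
    (fun i => hs _) (by rw [h1, h2]; exact hmem)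
  rw [h3, h4] at this
  exact this

lemma valid_subst_cont [DecidableEq E] {S R P : Set E} {psi pi : E → ℝ}
    (h : ValidPair S R P psi pi) (r0 : E) {m : ℕ} (a : Fin m → E) (c : Fin m → ℝ)
    (ha : ∀ j, a j ∈ R) (hc : ∀ j, 0 ≤ c j) (hrep : ∑ j, c j • a j = r0) :
    ValidPair S R P (Function.update psi r0 (min (psi r0) (∑ j, c j * psi (a j)))) pi := by
  classical
  set T := ∑ j, c j * psi (a j) with hT
  rcases le_or_gt (psi r0) T with hle | hlt
  · rw [min_eq_left hle, Function.update_eq_self]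
    exact h
  · rw [min_eq_right hlt.le]
    intro k l r p hr hp s y hs hmem
    set col : Fin k ⊕ (Fin k × Fin m) → E := Sum.elim r (fun ij => a ij.2) with hcol
    set s' : Fin k ⊕ (Fin k × Fin m) → ℝ :=
      Sum.elim (fun i => if r i = r0 then 0 else s i)
        (fun ij => if r ij.1 = r0 then s ij.1 * c ij.2 else 0) with hs'
    have hs'nonneg : ∀ i, 0 ≤ s' i := by
      rintro (i | ⟨i, j⟩) <;> simp only [hs', Sum.elim_inl, Sum.elim_inr]
      · split <;> [exact le_refl 0; exact hs i]
      · split <;> [exact mul_nonneg (hs i) (hc j); exact le_refl 0]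
    have key : ∑ i, s' i • col i = ∑ i, s i • r i := by
      rw [Fintype.sum_sum_type, Fintype.sum_prod_type, ← Finset.sum_add_distrib]
      refine Finset.sum_congr rfl fun i _ => ?_
      by_cases hi : r i = r0
      · simp only [hs', hcol, Sum.elim_inl, Sum.elim_inr, hi, if_true, zero_smul, zero_add]
        calc ∑ j, (s i * c j) • a j = s i • ∑ j, c j • a j := by
              rw [Finset.smul_sum]; exact Finset.sum_congr rfl fun j _ => mul_smul _ _ _
          _ = s i • r0 := by rw [hrep]
      · simp [hs', hcol, hi]
    have keyobj : ∑ i, psi (col i) * s' i = ∑ i, Function.update psi r0 T (r i) * s i := by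
      rw [Fintype.sum_sum_type, Fintype.sum_prod_type, ← Finset.sum_add_distrib]
      refine Finset.sum_congr rfl fun i _ => ?_
      by_cases hi : r i = r0
      · simp only [hs', hcol, Sum.elim_inl, Sum.elim_inr, hi, if_true, mul_zero, zero_add,
          Function.update_self]
        calc ∑ j, psi (a j) * (s i * c j) = (∑ j, c j * psi (a j)) * s i := by
              rw [Finset.sum_mul]; exact Finset.sum_congr rfl fun j _ => by ring
          _ = T * s i := by rw [hT]
          _ = T * s i := rfl
      · simp [hs', hcol, hi, Function.update_of_ne hi]
    have hmem' : (∑ i, s' i • col i) + (∑ j, (y j : ℝ) • p j) ∈ S := by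
      rw [key]; exact hmem
    have := validPair_fintype h col p
      (by rintro (i | ⟨i, j⟩); exacts [hr i, ha j]) hp s' y hs'nonneg hmem'
    rw [keyobj] at this
    exact this

lemma valid_subst_int [DecidableEq E] {S R P : Set E} {psi pi : E → ℝ}
    (h : ValidPair S R P psi pi) (p0 : E) {m : ℕ} (b : Fin m → E) (w : Fin m → ℕ)
    (hb : ∀ j, b j ∈ P) (hrep : ∑ j, (w j : ℝ) • b j = p0) :
    ValidPair S R P psi (Function.update pi p0 (min (pi p0) (∑ j, (w j : ℝ) * pi (b j)))) := by
  classical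
  set T := ∑ j, (w j : ℝ) * pi (b j) with hT
  rcases le_or_gt (pi p0) T with hle | hlt
  · rw [min_eq_left hle, Function.update_eq_self]
    exact h
  · rw [min_eq_right hlt.le]
    intro k l r p hr hp s y hs hmem
    set col : Fin l ⊕ (Fin l × Fin m) → E := Sum.elim p (fun ij => b ij.2) with hcol
    set y' : Fin l ⊕ (Fin l × Fin m) → ℕ :=
      Sum.elim (fun j => if p j = p0 then 0 else y j)
        (fun ij => if p ij.1 = p0 then y ij.1 * w ij.2 else 0) with hy'
    have key : ∑ j, (y' j : ℝ) • col j = ∑ j, (y j : ℝ) • p j := by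
      rw [Fintype.sum_sum_type, Fintype.sum_prod_type, ← Finset.sum_add_distrib]
      refine Finset.sum_congr rfl fun j _ => ?_
      by_cases hj : p j = p0
      · simp only [hy', hcol, Sum.elim_inl, Sum.elim_inr, hj, if_true, Nat.cast_zero,
          zero_smul, zero_add, Nat.cast_mul]
        calc ∑ i, ((y j : ℝ) * (w i : ℝ)) • b i = (y j : ℝ) • ∑ i, (w i : ℝ) • b i := by
              rw [Finset.smul_sum]; exact Finset.sum_congr rfl fun i _ => mul_smul _ _ _
          _ = (y j : ℝ) • p0 := by rw [hrep]
      · simp [hy', hcol, hj]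
    have keyobj : ∑ j, pi (col j) * (y' j : ℝ) =
        ∑ j, Function.update pi p0 T (p j) * (y j : ℝ) := by
      rw [Fintype.sum_sum_type, Fintype.sum_prod_type, ← Finset.sum_add_distrib]
      refine Finset.sum_congr rfl fun j _ => ?_
      by_cases hj : p j = p0
      · simp only [hy', hcol, Sum.elim_inl, Sum.elim_inr, hj, if_true, Nat.cast_zero,
          mul_zero, zero_add, Function.update_self, Nat.cast_mul]
        calc ∑ i, pi (b i) * ((y j : ℝ) * (w i : ℝ))
            = (∑ i, (w i : ℝ) * pi (b i)) * (y j : ℝ) := by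
              rw [Finset.sum_mul]; exact Finset.sum_congr rfl fun i _ => by ring
          _ = T * (y j : ℝ) := by rw [hT]
          _ = T * (y j : ℝ) := rfl
      · simp [hy', hcol, hj, Function.update_of_ne hj]
    have hmem' : (∑ i, s i • r i) + (∑ j, (y' j : ℝ) • col j) ∈ S := by
      rw [key]; exact hmem
    have := validPair_fintype h r col hr
      (by rintro (j | ⟨j, i⟩); exacts [hp j, hb i]) s y' hs hmem'
    rw [keyobj] at this
    exact this

lemma psi_scale [DecidableEq E] {S R P : Set E} {psi pi : E → ℝ}
    (hmin : IsMinimalValidPair S R P psi pi) {r : E} (hr : r ∈ R) {lam : ℝ}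
    (hlam : 0 < lam) (hlr : lam • r ∈ R) : psi (lam • r) ≤ lam * psi r := by
  classical
  obtain ⟨hval, hminimal⟩ := hmin
  have hrep : ∑ j : Fin 1, (![lam] j) • (![r] j) = lam • r := by
    simp [Fin.sum_univ_one]
  have hvalid' := valid_subst_cont hval (lam • r) ![r] ![lam]
    (by intro j; fin_cases j; exact hr) (by intro j; fin_cases j; exact hlam.le) hrep
  have hT : (∑ j : Fin 1, ![lam] j * psi (![r] j)) = lam * psi r := by
    simp [Fin.sum_univ_one]
  rw [hT] at hvalid'
  have hle : ∀ x ∈ R, Function.update psi (lam • r) (min (psi (lam • r)) (lam * psi r)) x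
      ≤ psi x := by
    intro x _
    by_cases hx : x = lam • r
    · subst hx; rw [Function.update_self]; exact min_le_left _ _
    · rw [Function.update_of_ne hx]
  have heq := (hminimal _ pi hvalid' hle (fun p _ => le_refl _)).1 (lam • r) hlr
  rw [Function.update_self] at heq
  exact min_eq_left_iff.mp heq

end Aux

/-- Theorem 2.2: minimal valid pairs are subadditive, and `ψ` is positively homogeneous. -/
theorem stmt3 {n : ℕ} (hn : 1 ≤ n) (S : Set (Fin n → ℝ)) (hSclosed : IsClosed S)
    (hS0 : (0 : Fin n → ℝ) ∉ S) (R P : Set (Fin n → ℝ)) (psi pi : (Fin n → ℝ) → ℝ)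
    (hmin : IsMinimalValidPair S R P psi pi) :
    (∀ r1 ∈ R, ∀ r2 ∈ R, r1 + r2 ∈ R → psi (r1 + r2) ≤ psi r1 + psi r2) ∧
      (∀ p1 ∈ P, ∀ p2 ∈ P, p1 + p2 ∈ P → pi (p1 + p2) ≤ pi p1 + pi p2) ∧
      (∀ r ∈ R, ∀ lam : ℝ, 0 < lam → lam • r ∈ R → psi (lam • r) = lam * psi r) := by
  classical
  obtain ⟨hval, hminimal⟩ := hmin
  refine ⟨?_, ?_, ?_⟩
  · intro r1 hr1 r2 hr2 hr12
    have hrep : ∑ j : Fin 2, (![(1:ℝ), 1] j) • (![r1, r2] j) = r1 + r2 := by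
      simp [Fin.sum_univ_two]
    have hvalid' := valid_subst_cont hval (r1 + r2) ![r1, r2] ![(1:ℝ), 1]
      (by intro j; fin_cases j; exacts [hr1, hr2])
      (by intro j; fin_cases j <;> norm_num) hrep
    have hT : (∑ j : Fin 2, ![(1:ℝ), 1] j * psi (![r1, r2] j)) = psi r1 + psi r2 := by
      simp [Fin.sum_univ_two]
    rw [hT] at hvalid'
    have hle : ∀ x ∈ R,
        Function.update psi (r1 + r2) (min (psi (r1 + r2)) (psi r1 + psi r2)) x ≤ psi x := by
      intro x _
      by_cases hx : x = r1 + r2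
      · subst hx; rw [Function.update_self]; exact min_le_left _ _
      · rw [Function.update_of_ne hx]
    have heq := (hminimal _ pi hvalid' hle (fun p _ => le_refl _)).1 (r1 + r2) hr12
    rw [Function.update_self] at heq
    exact min_eq_left_iff.mp heq
  · intro p1 hp1 p2 hp2 hp12
    have hrep : ∑ j : Fin 2, ((![(1:ℕ), 1] j : ℝ)) • (![p1, p2] j) = p1 + p2 := by
      simp [Fin.sum_univ_two]
    have hvalid' := valid_subst_int hval (p1 + p2) ![p1, p2] ![(1:ℕ), 1]
      (by intro j; fin_cases j; exacts [hp1, hp2]) hrep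
    have hT : (∑ j : Fin 2, ((![(1:ℕ), 1] j : ℝ)) * pi (![p1, p2] j)) = pi p1 + pi p2 := by
      simp [Fin.sum_univ_two]
    rw [hT] at hvalid'
    have hle : ∀ x ∈ P,
        Function.update pi (p1 + p2) (min (pi (p1 + p2)) (pi p1 + pi p2)) x ≤ pi x := by
      intro x _
      by_cases hx : x = p1 + p2
      · subst hx; rw [Function.update_self]; exact min_le_left _ _
      · rw [Function.update_of_ne hx]
    have heq := (hminimal psi _ hvalid' (fun r _ => le_refl _) hle).2 (p1 + p2) hp12
    rw [Function.update_self] at heq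
    exact min_eq_left_iff.mp heq
  · intro r hr lam hlam hlr
    have h1 : psi (lam • r) ≤ lam * psi r := psi_scale ⟨hval, hminimal⟩ hr hlam hlr
    have h2 : psi ((lam⁻¹ : ℝ) • (lam • r)) ≤ lam⁻¹ * psi (lam • r) := by
      have := psi_scale ⟨hval, hminimal⟩ hlr (inv_pos.mpr hlam)
        (by rw [smul_smul, inv_mul_cancel₀ hlam.ne', one_smul]; exact hr)
      rwa [smul_smul, inv_mul_cancel₀ hlam.ne', one_smul] at this ⊢
    rw [smul_smul, inv_mul_cancel₀ hlam.ne', one_smul] at h2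
    have h3 : lam * psi r ≤ psi (lam • r) := by
      have := mul_le_mul_of_nonneg_left h2 hlam.le
      rwa [mul_inv_cancel_left₀ hlam.ne'] at this
    linarith
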